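/- Let χ be a primitive Dirichlet character modulo p^k (p prime, k ≥ 1) and let b be an integer with p^{k−1} || b. Then ∑_{a mod p^k} χ(a) · conj(χ(a + b)) = −p^{k−1}. -/

import Mathlib

open Finset

/-- Sum over `range n` of a function of the cast equals sum over `ZMod n`. -/
lemma aux_sum_range {n : ℕ} [NeZero n] (g : ZMod n → ℂ) :
    ∑ a ∈ Finset.range n, g (a : ZMod n) = ∑ x : ZMod n, g x := by
  refine Finset.sum_nbij' (fun a => (a : ZMod n)) ZMod.val ?_ ?_ ?_ ?_ ?_
  · intro a _; exact Finset.mem_univ _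
  · intro x _; exact Finset.mem_range.mpr (ZMod.val_lt x)
  · intro a ha; exact ZMod.val_cast_of_lt (Finset.mem_range.mp ha)
  · intro x _; exact ZMod.natCast_rightInverse x
  · intro a _; rfl

/-- Orthogonality: a nontrivial multiplicative function on an additive group sums to zero. -/
lemma aux_sum_eq_zero {G : Type*} [AddCommGroup G] [Fintype G] (f : G → ℂ)
    (hmul : ∀ a b : G, f (a + b) = f a * f b) (t : G) (ht : f t ≠ 1) :
    ∑ s : G, f s = 0 := by
  have h : f t * ∑ s : G, f s = ∑ s : G, f s := by
    rw [Finset.mul_sum]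
    simp_rw [← hmul]
    exact Fintype.sum_equiv (Equiv.addLeft t) _ _ (fun s => rfl)
  have h2 : (f t - 1) * ∑ s : G, f s = 0 := by rw [sub_mul, one_mul, h, sub_self]
  rcases mul_eq_zero.mp h2 with h3 | h3
  · exact absurd (sub_eq_zero.mp h3) ht
  · exact h3

/- If `χ` is primitive mod `p^k` and `p^{k-1} ∥ b`, then
`∑_{a mod p^k} χ(a) conj(χ(a+b)) = -p^{k-1}`. -/
theorem primitive_character_shifted_sum_eq_neg
    (p k : ℕ) (hp : p.Prime) (hk : 1 ≤ k)
    (χ : DirichletCharacter ℂ (p ^ k)) (hχ : χ.IsPrimitive)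
    (b : ℤ)
    (hdvd : (p : ℤ) ^ (k - 1) ∣ b) (hndvd : ¬ (p : ℤ) ^ k ∣ b) :
    ∑ a ∈ Finset.range (p ^ k),
      χ (a : ZMod (p ^ k)) *
        (starRingEnd ℂ) (χ ((a : ZMod (p ^ k)) + (b : ZMod (p ^ k)))) =
      -(p : ℂ) ^ (k - 1) := by
  obtain ⟨K, rfl⟩ : ∃ K, k = K + 1 := ⟨k - 1, (Nat.succ_pred_eq_of_pos hk).symm⟩
  simp only [Nat.add_sub_cancel] at hdvd ⊢
  obtain ⟨c, rfl⟩ := hdvd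
  have hpc : ¬ (p : ℤ) ∣ c := by
    intro h
    apply hndvd
    rw [pow_succ]
    exact mul_dvd_mul_left _ h
  classical
  haveI : Fact p.Prime := ⟨hp⟩
  haveI : NeZero (p ^ (K + 1)) := ⟨pow_ne_zero _ hp.pos.ne'⟩
  haveI : NeZero (p ^ K) := ⟨pow_ne_zero _ hp.pos.ne'⟩
  have hpn : p ∣ p ^ (K + 1) := dvd_pow_self p (Nat.succ_ne_zero K)
  set π : ZMod (p ^ (K + 1)) →+* ZMod p := ZMod.castHom hpn (ZMod p) with hπ
  set M : ZMod (p ^ (K + 1)) := (p : ZMod (p ^ (K + 1))) ^ K with hMdef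
  -- π of a val-cast
  have hπval : ∀ x : ZMod (p ^ (K + 1)), π ((x.val : ℕ) : ZMod (p ^ (K + 1))) = π x := by
    intro x
    rw [ZMod.natCast_val, ZMod.cast_id]
  have hπnat : ∀ a : ℕ, π (a : ZMod (p ^ (K + 1))) = (a : ZMod p) := fun a => map_natCast π a
  have hvalp : ∀ s : ZMod p, ((s.val : ℕ) : ZMod p) = s := fun s => ZMod.natCast_rightInverse s
  -- key congruence
  have key : ∀ x y : ZMod (p ^ (K + 1)), π x = π y → M * x = M * y := by
    intro x y h
    have h0 : π (x - y) = 0 := by rw [map_sub, h, sub_self]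
    have hdv : p ∣ (x - y).val := by
      rw [← ZMod.natCast_eq_zero_iff _ p, ← hπnat, hπval, h0]
    obtain ⟨j, hj⟩ := hdv
    have hx : x - y = ((p * j : ℕ) : ZMod (p ^ (K + 1))) := by
      rw [← hj, ZMod.natCast_val, ZMod.cast_id]
    have hz : M * (x - y) = 0 := by
      rw [hx, hMdef]
      have h1 : (p : ZMod (p ^ (K + 1))) ^ K * ((p * j : ℕ) : ZMod (p ^ (K + 1)))
          = ((p ^ (K + 1) * j : ℕ) : ZMod (p ^ (K + 1))) := by
        push_cast; ring
      rw [h1, Nat.cast_mul, ZMod.natCast_self, zero_mul]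
    linear_combination hz
  -- unit iff nonzero mod p
  have hunit : ∀ x : ZMod (p ^ (K + 1)), IsUnit x ↔ π x ≠ 0 := by
    intro x
    rw [← hπval, hπnat, Ne, ZMod.natCast_eq_zero_iff]
    constructor
    · intro h hd
      have h2 := (ZMod.isUnit_iff_coprime x.val (p ^ (K + 1))).mp
        (by rwa [ZMod.natCast_rightInverse x])
      rw [Nat.coprime_pow_right_iff (Nat.succ_pos K)] at h2
      exact (Nat.Prime.coprime_iff_not_dvd hp).mp (Nat.coprime_comm.mp h2) hd
    · intro h
      have h2 : Nat.Coprime x.val (p ^ (K + 1)) := by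
        rw [Nat.coprime_pow_right_iff (Nat.succ_pos K)]
        exact Nat.coprime_comm.mp ((Nat.Prime.coprime_iff_not_dvd hp).mpr h)
      have h3 := (ZMod.isUnit_iff_coprime x.val (p ^ (K + 1))).mpr h2
      rwa [ZMod.natCast_rightInverse x] at h3
  -- fiber cards
  have card_fiber : ∀ s : ZMod p,
      (univ.filter fun x : ZMod (p ^ (K + 1)) => π x = s).card = p ^ K := by
    have hconst : ∀ s : ZMod p, (univ.filter fun x : ZMod (p ^ (K + 1)) => π x = s).card
        = (univ.filter fun x : ZMod (p ^ (K + 1)) => π x = 0).card := by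
      intro s
      refine Finset.card_nbij' (fun x => x - ((s.val : ℕ) : ZMod (p ^ (K + 1))))
        (fun x => x + ((s.val : ℕ) : ZMod (p ^ (K + 1)))) ?_ ?_ ?_ ?_
      · intro x hx
        simp only [Finset.coe_filter, Set.mem_setOf_eq, Finset.mem_filter, Finset.mem_univ, true_and] at hx ⊢
        rw [map_sub, hx, hπnat, hvalp, sub_self]
      · intro x hx
        simp only [Finset.coe_filter, Set.mem_setOf_eq, Finset.mem_filter, Finset.mem_univ, true_and] at hx ⊢
        rw [map_add, hx, hπnat, hvalp, zero_add]
      · intro x _; ring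
      · intro x _; ring
    have htot := Finset.card_eq_sum_card_fiberwise
      (fun (x : ZMod (p ^ (K + 1))) (_ : x ∈ univ) => Finset.mem_univ (π x))
    rw [Finset.card_univ, ZMod.card] at htot
    have htot2 : p ^ (K + 1)
        = p * (univ.filter fun x : ZMod (p ^ (K + 1)) => π x = 0).card :=
      calc p ^ (K + 1) = ∑ b : ZMod p, (univ.filter fun a => π a = b).card := htot
        _ = ∑ _b : ZMod p, (univ.filter fun x => π x = 0).card :=
            Finset.sum_congr rfl fun s _ => hconst s
        _ = p * (univ.filter fun x => π x = 0).card := by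
            rw [Finset.sum_const, Finset.card_univ, ZMod.card, smul_eq_mul]
    have h4 : p * (univ.filter fun x : ZMod (p ^ (K + 1)) => π x = 0).card = p * p ^ K := by
      rw [← htot2, pow_succ, mul_comm]
    intro s
    rw [hconst s]
    exact Nat.eq_of_mul_eq_mul_left hp.pos h4
  -- the auxiliary multiplicative function
  set ψ : ZMod p → ℂ :=
    fun s => χ (1 + M * ((s.val : ℕ) : ZMod (p ^ (K + 1)))) with hψdef
  have hψ0 : ψ 0 = 1 := by
    rw [hψdef]
    simp [ZMod.val_zero]
  have hχne : χ ≠ 1 := by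
    intro h
    have h1 := DirichletCharacter.conductor_one (R := ℂ) (n := p ^ (K + 1))
    rw [DirichletCharacter.IsPrimitive, h, h1] at hχ
    have h2 : p ≤ p ^ (K + 1) := Nat.le_self_pow (Nat.succ_ne_zero K) p
    have h3 := hp.one_lt
    omega
  -- the main orthogonality input
  have hsum0 : ∑ s : ZMod p, ψ s = 0 := by
    rcases Nat.eq_zero_or_pos K with hK | hK
    · -- K = 0 : direct bijection with ZMod (p^1)
      subst hK
      have hM1 : M = 1 := by rw [hMdef, pow_zero]
      have hbij : ∑ s : ZMod p, ψ s = ∑ x : ZMod (p ^ (0 + 1)), χ x := by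
        refine Fintype.sum_bijective (fun s : ZMod p => 1 + ((s.val : ℕ) : ZMod (p ^ (0 + 1))))
          ?_ _ _ ?_
        · constructor
          · intro s t hst
            dsimp only at hst
            have h1 := congrArg π hst
            rw [map_add, map_add, hπnat, hπnat, hvalp, hvalp] at h1
            exact add_left_cancel h1
          · intro x
            refine ⟨π (x - 1), ?_⟩
            have hvlt : (x - 1).val < p := by
              have h0 := ZMod.val_lt (x - 1)
              have hpe : p ^ (0 + 1) = p := by norm_num
              omega
            have h1 : (π (x - 1)).val = (x - 1).val := by
              rw [← hπval, hπnat, ZMod.val_natCast, Nat.mod_eq_of_lt hvlt]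
            dsimp only
            rw [h1, ZMod.natCast_val, ZMod.cast_id]
            ring
        · intro s
          rw [hψdef]
          simp only [hM1, one_mul]
      rw [hbij]
      exact MulChar.sum_eq_zero_of_ne_one hχne
    · -- K ≥ 1 : ψ is additive-to-multiplicative and nontrivial
      have hMM : M * M = 0 := by
        rw [hMdef, ← pow_add]
        have h1 : ((p : ZMod (p ^ (K + 1)))) ^ (K + K) = ((p ^ (K + K) : ℕ) : ZMod (p ^ (K + 1))) := by
          push_cast; ring
        rw [h1, ZMod.natCast_eq_zero_iff]
        exact pow_dvd_pow p (by omega)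
      have hmul : ∀ a b : ZMod p, ψ (a + b) = ψ a * ψ b := by
        intro a b
        rw [hψdef]
        simp only
        have h1 : M * (((a + b).val : ℕ) : ZMod (p ^ (K + 1)))
            = M * ((a.val + b.val : ℕ) : ZMod (p ^ (K + 1))) := by
          apply key
          rw [hπnat, hπnat, hvalp]
          push_cast
          rw [hvalp, hvalp]
        rw [h1, ← map_mul]
        congr 1
        push_cast
        linear_combination (-(a.val : ZMod (p ^ (K+1))) * (b.val : ZMod (p ^ (K+1)))) * hMM
      -- nontriviality from primitivity
      have hnf : ¬ χ.FactorsThrough (p ^ K) := by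
        intro h
        have h1 : χ.conductor ≤ p ^ K :=
          Nat.sInf_le ((DirichletCharacter.mem_conductorSet_iff χ).mpr h)
        rw [hχ] at h1
        have h2 : p ^ K < p ^ (K + 1) := Nat.pow_lt_pow_succ hp.one_lt
        omega
      rw [DirichletCharacter.factorsThrough_iff_ker_unitsMap (pow_dvd_pow p (K.le_succ))] at hnf
      obtain ⟨u, hu1, hu2⟩ := SetLike.not_le_iff_exists.mp hnf
      rw [MonoidHom.mem_ker] at hu1
      rw [MonoidHom.mem_ker] at hu2
      have hu1' : ZMod.castHom (pow_dvd_pow p (K.le_succ)) (ZMod (p ^ K)) (↑u) = 1 := by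
        have := congrArg (Units.val) hu1
        rwa [ZMod.unitsMap_def, Units.coe_map, Units.val_one] at this
      have hdvd2 : p ^ K ∣ ((↑u - 1 : ZMod (p ^ (K + 1)))).val := by
        rw [← ZMod.natCast_eq_zero_iff _ (p ^ K)]
        have h3 : (((↑u - 1 : ZMod (p ^ (K + 1))).val : ℕ) : ZMod (p ^ K))
            = ZMod.castHom (pow_dvd_pow p (K.le_succ)) (ZMod (p ^ K)) (↑u - 1) := by
          rw [ZMod.castHom_apply, ZMod.natCast_val]
        rw [h3, map_sub, hu1', map_one, sub_self]
      obtain ⟨j, hj⟩ := hdvd2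
      have hu3 : (↑u : ZMod (p ^ (K + 1))) = 1 + ((p ^ K * j : ℕ) : ZMod (p ^ (K + 1))) := by
        rw [← hj, ZMod.natCast_val, ZMod.cast_id]
        ring
      have ht : ψ ((j : ℕ) : ZMod p) ≠ 1 := by
        have h4 : M * ((((j : ℕ) : ZMod p).val : ℕ) : ZMod (p ^ (K + 1)))
            = M * ((j : ℕ) : ZMod (p ^ (K + 1))) := by
          apply key
          rw [hπnat, hπnat, hvalp]
        rw [hψdef]
        simp only
        rw [h4]
        have h5 : (1 : ZMod (p ^ (K + 1))) + M * ((j : ℕ) : ZMod (p ^ (K + 1))) = ↑u := by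
          rw [hu3, hMdef]
          push_cast
          ring
        rw [h5]
        intro h6
        apply hu2
        ext
        rw [MulChar.coe_toUnitHom, Units.val_one]
        exact h6
      exact aux_sum_eq_zero ψ hmul _ ht
  -- remaining part
  have hc0 : (c : ZMod p) ≠ 0 := by
    rwa [Ne, ZMod.intCast_zmod_eq_zero_iff_dvd]
  set F : ZMod p → ℂ := fun s => if s = 0 then 0 else (starRingEnd ℂ) (ψ s) with hFdef
  have hFsum : ∑ s : ZMod p, F s = -1 := by
    have h1 : ∀ s : ZMod p, F s = (starRingEnd ℂ) (ψ s) - (if s = 0 then 1 else 0) := by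
      intro s
      by_cases h : s = 0
      · rw [hFdef]
        simp [h, hψ0]
      · rw [hFdef]
        simp [h]
    rw [Finset.sum_congr rfl fun s _ => h1 s, Finset.sum_sub_distrib, ← map_sum, hsum0,
      map_zero, Finset.sum_ite_eq' univ (0 : ZMod p) (fun _ => (1 : ℂ))]
    simp
  set B : ZMod (p ^ (K + 1)) := (((p : ℤ) ^ K * c : ℤ) : ZMod (p ^ (K + 1))) with hBdef
  have hB : B = M * ((c : ℤ) : ZMod (p ^ (K + 1))) := by
    rw [hBdef, hMdef]
    push_cast
    ring
  have stepB : ∀ x : ZMod (p ^ (K + 1)), χ x * (starRingEnd ℂ) (χ (x + B))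
      = if IsUnit x then (starRingEnd ℂ) (χ (1 + B * Ring.inverse x)) else 0 := by
    intro x
    by_cases h : IsUnit x
    · rw [if_pos h]
      have h1 : (1 : ZMod (p ^ (K + 1))) + B * Ring.inverse x = (x + B) * Ring.inverse x := by
        rw [add_mul, Ring.mul_inverse_cancel x h]
      rw [h1, map_mul, map_mul]
      have h2 : χ (Ring.inverse x) * χ x = 1 := by
        rw [← map_mul, Ring.inverse_mul_cancel x h, map_one]
      have h3 : (starRingEnd ℂ) (χ (Ring.inverse x)) = χ x := by
        have hn1 : ‖χ x‖ = 1 := by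
          have h4 := χ.unit_norm_eq_one h.unit
          rwa [IsUnit.unit_spec] at h4
        rw [eq_inv_of_mul_eq_one_left h2, Complex.inv_eq_conj hn1, Complex.conj_conj]
      rw [h3]
      ring
    · rw [if_neg h, χ.map_nonunit h, zero_mul]
  have einv : Function.Involutive
      (fun x : ZMod (p ^ (K + 1)) => if IsUnit x then Ring.inverse x else x) := by
    intro x
    by_cases h : IsUnit x
    · rcases h with ⟨u, rfl⟩
      simp only [u.isUnit, if_true, Ring.inverse_unit, (u⁻¹).isUnit, inv_inv]
    · simp only [if_neg h]
  have stepC : ∑ x : ZMod (p ^ (K + 1)),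
        (if IsUnit x then (starRingEnd ℂ) (χ (1 + B * Ring.inverse x)) else 0)
      = ∑ x : ZMod (p ^ (K + 1)),
        (if IsUnit x then (starRingEnd ℂ) (χ (1 + B * x)) else 0) := by
    rw [← Equiv.sum_comp einv.toPerm
      (fun x => if IsUnit x then (starRingEnd ℂ) (χ (1 + B * x)) else 0)]
    refine Fintype.sum_congr _ _ fun x => ?_
    rw [Function.Involutive.coe_toPerm]
    by_cases h : IsUnit x
    · have h2 : IsUnit (Ring.inverse x) := by
        rcases h with ⟨u, rfl⟩
        rw [Ring.inverse_unit]
        exact (u⁻¹).isUnit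
      simp only [if_pos h, if_pos h2]
    · simp only [if_neg h]
  have stepD : ∀ x : ZMod (p ^ (K + 1)),
      (if IsUnit x then (starRingEnd ℂ) (χ (1 + B * x)) else 0) = F ((c : ZMod p) * π x) := by
    intro x
    by_cases h : IsUnit x
    · have hπx := (hunit x).mp h
      have hcs : (c : ZMod p) * π x ≠ 0 := mul_ne_zero hc0 hπx
      rw [if_pos h, hFdef]
      simp only [if_neg hcs]
      congr 1
      have h1 : M * ((((c : ZMod p) * π x).val : ℕ) : ZMod (p ^ (K + 1)))
          = M * (((c : ℤ) : ZMod (p ^ (K + 1))) * x) := by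
        apply key
        rw [hπnat, hvalp, map_mul]
        congr 1
        exact (map_intCast π c).symm
      rw [hψdef]
      simp only
      rw [h1, hB]
      ring_nf
    · rw [if_neg h]
      have hπx : π x = 0 := by
        by_contra h2
        exact h ((hunit x).mpr h2)
      rw [hFdef]
      simp only [hπx, mul_zero, if_pos]
  have main : ∑ x : ZMod (p ^ (K + 1)), χ x * (starRingEnd ℂ) (χ (x + B))
      = -(p : ℂ) ^ K := by
    calc ∑ x : ZMod (p ^ (K + 1)), χ x * (starRingEnd ℂ) (χ (x + B))
        = ∑ x : ZMod (p ^ (K + 1)),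
            (if IsUnit x then (starRingEnd ℂ) (χ (1 + B * Ring.inverse x)) else 0) :=
          Fintype.sum_congr _ _ stepB
      _ = ∑ x : ZMod (p ^ (K + 1)),
            (if IsUnit x then (starRingEnd ℂ) (χ (1 + B * x)) else 0) := stepC
      _ = ∑ x : ZMod (p ^ (K + 1)), F ((c : ZMod p) * π x) := Fintype.sum_congr _ _ stepD
      _ = ∑ s : ZMod p, ∑ x ∈ univ.filter (fun x : ZMod (p ^ (K + 1)) => π x = s),
            F ((c : ZMod p) * π x) :=
          (Finset.sum_fiberwise_of_maps_to (fun x _ => Finset.mem_univ (π x)) _).symm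
      _ = ∑ s : ZMod p, (p ^ K : ℕ) • F ((c : ZMod p) * s) := by
          refine Finset.sum_congr rfl fun s _ => ?_
          rw [Finset.sum_congr rfl (fun x hx => by rw [(Finset.mem_filter.mp hx).2]),
            Finset.sum_const, card_fiber s]
      _ = (p ^ K : ℕ) • ∑ s : ZMod p, F ((c : ZMod p) * s) := by rw [← Finset.smul_sum]
      _ = (p ^ K : ℕ) • ∑ s : ZMod p, F s := by
          congr 1
          exact Fintype.sum_bijective _ (mulLeft_bijective₀ ((c : ZMod p)) hc0)
            (fun s => F ((c : ZMod p) * s)) F (fun s => rfl) |>.symm ▸ rfl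
      _ = (p ^ K : ℕ) • (-1 : ℂ) := by rw [hFsum]
      _ = -(p : ℂ) ^ K := by
          rw [nsmul_eq_mul]
          push_cast
          ring
  calc ∑ a ∈ Finset.range (p ^ (K + 1)),
        χ (a : ZMod (p ^ (K + 1))) * (starRingEnd ℂ) (χ ((a : ZMod (p ^ (K + 1))) + B))
      = ∑ x : ZMod (p ^ (K + 1)), χ x * (starRingEnd ℂ) (χ (x + B)) :=
        aux_sum_range (fun x => χ x * (starRingEnd ℂ) (χ (x + B)))
    _ = -(p : ℂ) ^ K := main
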